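/- Let E be a finite ground set, F ⊆ 2^E a downward-closed family containing the empty set, and let p ∈ (0,1)^E lie in the relative interior of the polytope conv{1_S : S ∈ F} (equivalently, assume there exists a full-support distribution on F with marginals p). Then the unique distribution μ* on F that maximizes the Shannon entropy −Σ_{S∈F} μ(S) log μ(S) subject to P_{S∼μ}[e ∈ S] = p_e for all e ∈ E has the Gibbs product form: there exist weights w_e > 0 such that μ*(S) = (∏_{e∈S} w_e)/Z for all S ∈ F, where Z = Σ_{T∈F} ∏_{e∈T} w_e. Moreover, setting ρ_e = w_e/(1+w_e) ∈ (0,1), for every e ∈ E and every T ∈ F with e ∉ T and P_{S∼μ*}[S∖{e} = T] > 0, the conditional probability P_{S∼μ*}[e ∈ S | S∖{e} = T] equals ρ_e if T ∪ {e} ∈ F and equals 0 otherwise. -/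

import Mathlib

open Finset

private lemma span_helper {ι κ : Type*} [Fintype ι] [Fintype κ]
    (v : κ → ι → ℝ) (L : ι → ℝ)
    (h : ∀ h : ι → ℝ, (∀ o, ∑ i, v o i * h i = 0) → ∑ i, L i * h i = 0) :
    ∃ c : κ → ℝ, ∀ i, ∑ o, c o * v o i = L i := by
  set e : (∀ _ : ι, ℝ) ≃ EuclideanSpace ℝ ι := (WithLp.equiv 2 _).symm with he
  have inner_eq : ∀ x y : EuclideanSpace ℝ ι, @inner ℝ _ _ x y = ∑ i, x i * y i := by
    intro x y
    simp [PiLp.inner_apply, RCLike.inner_apply, mul_comm]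
  have happ : ∀ (x : ∀ _ : ι, ℝ) i, e x i = x i := fun x i => rfl
  have hex : ∃ c : κ → ℝ, ∑ o, c o • e (v o) = e L := by
    rw [← Submodule.mem_span_range_iff_exists_fun]
    set K := Submodule.span ℝ (Set.range fun o => e (v o))
    rw [← Submodule.orthogonal_orthogonal K, Submodule.mem_orthogonal]
    intro u hu
    rw [real_inner_comm, inner_eq]
    have h2 : ∀ i, e L i = L i := happ L
    simp only [h2]
    refine h u (fun o => ?_)
    have h3 := (Submodule.mem_orthogonal K u).1 hu _ (Submodule.subset_span ⟨o, rfl⟩)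
    rw [inner_eq] at h3
    simpa only [happ] using h3
  obtain ⟨c, hc⟩ := hex
  refine ⟨c, fun i => ?_⟩
  have h4 := congrFun (congrArg (⇑e.symm) hc) i
  simp only [Equiv.symm_apply_apply] at h4
  rw [← h4]
  rw [show e.symm (∑ o, c o • e (v o)) i = (∑ o, c o • e (v o)) i from rfl]
  rw [show ((∑ o, c o • e (v o)) : EuclideanSpace ℝ ι) i = ∑ o, (c o • e (v o)) i from by
    rw [WithLp.ofLp_sum]; exact Finset.sum_apply i univ _]
  exact Finset.sum_congr rfl fun o _ => by rw [PiLp.smul_apply, happ, smul_eq_mul]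

theorem stmt_0
    {E : Type*} [Fintype E] [DecidableEq E]
    (F : Finset (Finset E))
    (hF_down : ∀ S ∈ F, ∀ T ⊆ S, T ∈ F)
    (hF_empty : ∅ ∈ F)
    (p : E → ℝ) (hp : ∀ e, 0 < p e ∧ p e < 1)
    -- relative interior hypothesis: there is a full-support distribution on F with marginals p
    (hrelint : ∃ ν : Finset E → ℝ,
      (∀ S, 0 ≤ ν S) ∧ (∀ S, ν S ≠ 0 → S ∈ F) ∧ (∀ S ∈ F, 0 < ν S) ∧
      (∑ S : Finset E, ν S) = 1 ∧
      (∀ e, ∑ S ∈ univ.filter (fun S => e ∈ S), ν S = p e))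
    -- μstar is a distribution on F with marginals p ...
    (μstar : Finset E → ℝ)
    (hμ_nonneg : ∀ S, 0 ≤ μstar S)
    (hμ_supp : ∀ S, μstar S ≠ 0 → S ∈ F)
    (hμ_sum : (∑ S : Finset E, μstar S) = 1)
    (hμ_marg : ∀ e, ∑ S ∈ univ.filter (fun S => e ∈ S), μstar S = p e)
    -- ... that maximizes the Shannon entropy among all such distributions
    (hμ_max : ∀ ν : Finset E → ℝ,
      (∀ S, 0 ≤ ν S) → (∀ S, ν S ≠ 0 → S ∈ F) → (∑ S : Finset E, ν S) = 1 →
      (∀ e, ∑ S ∈ univ.filter (fun S => e ∈ S), ν S = p e) →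
      (-∑ S ∈ F, ν S * Real.log (ν S)) ≤ (-∑ S ∈ F, μstar S * Real.log (μstar S))) :
    -- uniqueness of the entropy maximizer
    (∀ ν : Finset E → ℝ,
      (∀ S, 0 ≤ ν S) → (∀ S, ν S ≠ 0 → S ∈ F) → (∑ S : Finset E, ν S) = 1 →
      (∀ e, ∑ S ∈ univ.filter (fun S => e ∈ S), ν S = p e) →
      ((-∑ S ∈ F, μstar S * Real.log (μstar S)) ≤ -∑ S ∈ F, ν S * Real.log (ν S)) →
      ν = μstar)
    -- Gibbs product form, and the conditional probability formula
    ∧ ∃ w : E → ℝ, (∀ e, 0 < w e) ∧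
      (∀ S ∈ F, μstar S = (∏ e ∈ S, w e) / (∑ T ∈ F, ∏ e ∈ T, w e)) ∧
      (∀ e, 0 < w e / (1 + w e) ∧ w e / (1 + w e) < 1) ∧
      (∀ e : E, ∀ T ∈ F, e ∉ T →
        0 < μstar T + μstar (insert e T) →
        μstar (insert e T) / (μstar T + μstar (insert e T)) =
          if insert e T ∈ F then w e / (1 + w e) else 0) := by
  classical
  obtain ⟨ν0, hν0_nonneg, hν0_supp, hν0_pos, hν0_sum, hν0_marg⟩ := hrelint
  have hHrw : ∀ ν : Finset E → ℝ,
      (-∑ S ∈ F, ν S * Real.log (ν S)) = ∑ S ∈ F, Real.negMulLog (ν S) := by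
    intro ν
    rw [← Finset.sum_neg_distrib]
    exact Finset.sum_congr rfl fun S _ => by rw [Real.negMulLog_eq_neg]
  have hmax' : ∀ ν : Finset E → ℝ,
      (∀ S, 0 ≤ ν S) → (∀ S, ν S ≠ 0 → S ∈ F) → (∑ S : Finset E, ν S) = 1 →
      (∀ e, ∑ S ∈ univ.filter (fun S => e ∈ S), ν S = p e) →
      (∑ S ∈ F, Real.negMulLog (ν S)) ≤ ∑ S ∈ F, Real.negMulLog (μstar S) := by
    intro ν h1 h2 h3 h4
    have := hμ_max ν h1 h2 h3 h4
    rwa [hHrw, hHrw] at this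
  have hle1 : ∀ (ν : Finset E → ℝ), (∀ S, 0 ≤ ν S) → (∑ S : Finset E, ν S) = 1 →
      ∀ S, ν S ≤ 1 := by
    intro ν h0 h1 S
    rw [← h1]
    exact Finset.single_le_sum (fun i _ => h0 i) (mem_univ S)
  have hzero : ∀ (ν : Finset E → ℝ), (∀ S, ν S ≠ 0 → S ∈ F) → ∀ S ∉ F, ν S = 0 := by
    intro ν hs S hS
    by_contra h
    exact hS (hs S h)
  -- Step 1 : full support of μstar
  have hμ_pos : ∀ S ∈ F, 0 < μstar S := by
    intro S0 hS0F
    rcases lt_or_eq_of_le (hμ_nonneg S0) with h | h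
    · exact h
    exfalso
    have hμS0 : μstar S0 = 0 := h.symm
    set a : ℝ := ν0 S0 with ha_def
    have ha : 0 < a := hν0_pos S0 hS0F
    have ha1 : a ≤ 1 := hle1 ν0 hν0_nonneg hν0_sum S0
    set K : ℝ := ∑ S ∈ F.erase S0, (Real.negMulLog (ν0 S) - Real.negMulLog (μstar S)) with hK_def
    set t : ℝ := min (1/2) (Real.exp (-(|K| + 1) / a)) with ht_def
    have ht0 : 0 < t := lt_min (by norm_num) (Real.exp_pos _)
    have ht1 : t ≤ 1/2 := min_le_left _ _
    have hlogt : Real.log t ≤ -(|K| + 1) / a := by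
      calc Real.log t ≤ Real.log (Real.exp (-(|K| + 1) / a)) :=
            Real.log_le_log ht0 (min_le_right _ _)
        _ = -(|K| + 1) / a := Real.log_exp _
    have halogt : |K| + 1 ≤ -(a * Real.log t) := by
      have := mul_le_mul_of_nonneg_left hlogt (le_of_lt ha)
      rw [mul_div_cancel₀ _ (ne_of_gt ha)] at this
      linarith
    set σ : Finset E → ℝ := fun S => (1 - t) * μstar S + t * ν0 S with hσdef
    have hσ1 : ∀ S, 0 ≤ σ S := fun S =>
      add_nonneg (mul_nonneg (by linarith) (hμ_nonneg S)) (mul_nonneg (le_of_lt ht0) (hν0_nonneg S))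
    have hσ2 : ∀ S, σ S ≠ 0 → S ∈ F := by
      intro S hS
      by_contra hSF
      exact hS (by simp [hσdef, hzero μstar hμ_supp S hSF, hzero ν0 hν0_supp S hSF])
    have hσ3 : (∑ S : Finset E, σ S) = 1 := by
      simp only [hσdef, Finset.sum_add_distrib, ← Finset.mul_sum, hμ_sum, hν0_sum]; ring
    have hσ4 : ∀ e, ∑ S ∈ univ.filter (fun S => e ∈ S), σ S = p e := by
      intro e
      simp only [hσdef, Finset.sum_add_distrib, ← Finset.mul_sum, hμ_marg e, hν0_marg e]; ring
    have hb := hmax' σ hσ1 hσ2 hσ3 hσ4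
    -- lower bound on the entropy of σ
    have hterm : ∀ S ∈ F.erase S0,
        (1 - t) * Real.negMulLog (μstar S) + t * Real.negMulLog (ν0 S) ≤ Real.negMulLog (σ S) := by
      intro S _
      have := Real.concaveOn_negMulLog.2 (Set.mem_Ici.2 (hμ_nonneg S)) (Set.mem_Ici.2 (hν0_nonneg S))
        (by linarith : (0:ℝ) ≤ 1 - t) (le_of_lt ht0) (by ring)
      simpa [hσdef, smul_eq_mul] using this
    have hS0term : Real.negMulLog (σ S0) = -(t * a * Real.log t) + t * Real.negMulLog a := by
      have : σ S0 = t * a := by simp [hσdef, hμS0, ha_def]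
      rw [this, Real.negMulLog, Real.log_mul (ne_of_gt ht0) (ne_of_gt ha), Real.negMulLog]
      ring
    have hsum_lb : ∑ S ∈ F, ((1 - t) * Real.negMulLog (μstar S) + t * Real.negMulLog (ν0 S))
        - ((1 - t) * Real.negMulLog (μstar S0) + t * Real.negMulLog (ν0 S0))
        + Real.negMulLog (σ S0) ≤ ∑ S ∈ F, Real.negMulLog (σ S) := by
      have e1 := Finset.add_sum_erase F (fun S => Real.negMulLog (σ S)) hS0F
      have e2 := Finset.add_sum_erase F
        (fun S => (1 - t) * Real.negMulLog (μstar S) + t * Real.negMulLog (ν0 S)) hS0F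
      have e3 := Finset.sum_le_sum hterm
      linarith
    have hErw : ∑ S ∈ F, ((1 - t) * Real.negMulLog (μstar S) + t * Real.negMulLog (ν0 S))
        = ∑ S ∈ F, Real.negMulLog (μstar S)
          + t * ∑ S ∈ F, (Real.negMulLog (ν0 S) - Real.negMulLog (μstar S)) := by
      rw [Finset.sum_add_distrib, ← Finset.mul_sum, ← Finset.mul_sum, Finset.sum_sub_distrib]
      ring
    have hKrw : ∑ S ∈ F, (Real.negMulLog (ν0 S) - Real.negMulLog (μstar S))
        = K + (Real.negMulLog a - Real.negMulLog (μstar S0)) := by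
      rw [hK_def, ← Finset.add_sum_erase F _ hS0F, ha_def]
      ring
    have hμ0nml : Real.negMulLog (μstar S0) = 0 := by rw [hμS0, Real.negMulLog_zero]
    have hanml : 0 ≤ Real.negMulLog a := Real.negMulLog_nonneg (le_of_lt ha) ha1
    have hC1 : (1 - t) * Real.negMulLog (μstar S0) + t * Real.negMulLog (ν0 S0)
        = t * Real.negMulLog a := by rw [hμ0nml, ← ha_def]; ring
    have hC2 : ∑ S ∈ F, ((1 - t) * Real.negMulLog (μstar S) + t * Real.negMulLog (ν0 S))
        = ∑ S ∈ F, Real.negMulLog (μstar S) + t * K + t * Real.negMulLog a := by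
      rw [hErw, hKrw, hμ0nml]; ring
    have hC3 : t * |K| + t ≤ -(t * a * Real.log t) := by
      nlinarith [mul_le_mul_of_nonneg_left halogt ht0.le]
    have hC4 : -(t * |K|) ≤ t * K := by
      nlinarith [mul_le_mul_of_nonneg_left (neg_abs_le K) ht0.le]
    have hC5 : 0 ≤ t * Real.negMulLog a := mul_nonneg ht0.le hanml
    rw [hC1, hC2, hS0term] at hsum_lb
    linarith
  -- Step 2 : stationarity
  have hstat : ∀ h : Finset E → ℝ, (∀ S, S ∉ F → h S = 0) →
      (∑ S : Finset E, h S) = 0 →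
      (∀ e, ∑ S ∈ univ.filter (fun S => e ∈ S), h S = 0) →
      ∑ S ∈ F, h S * Real.log (μstar S) = 0 := by
    intro h hsupp hsum hmarg
    have hFne : F.Nonempty := ⟨∅, hF_empty⟩
    set g : ℝ → ℝ := fun t => ∑ S ∈ F, Real.negMulLog (μstar S + t * h S) with hg_def
    -- derivative
    have hderiv : HasDerivAt g (∑ S ∈ F, (-Real.log (μstar S) - 1) * h S) 0 := by
      apply HasDerivAt.fun_sum
      intro S hS
      have h1 : HasDerivAt (fun t : ℝ => μstar S + t * h S) (h S) 0 := by
        simpa using ((hasDerivAt_id (0 : ℝ)).mul_const (h S)).const_add (μstar S)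
      have h2 : HasDerivAt Real.negMulLog (-Real.log (μstar S) - 1) (μstar S) :=
        Real.hasDerivAt_negMulLog (ne_of_gt (hμ_pos S hS))
      rw [show μstar S = μstar S + 0 * h S by ring] at h2
      simpa [Function.comp_def] using h2.comp 0 h1
    -- local max
    have hlocmax : IsLocalMax g 0 := by
      set ε : ℝ := F.inf' hFne (fun S => μstar S / (|h S| + 1)) with hε_def
      have hε : 0 < ε := by
        rw [hε_def, Finset.lt_inf'_iff]
        intro S hS
        exact div_pos (hμ_pos S hS) (by positivity)
      have hkey : ∀ t : ℝ, |t| < ε → g t ≤ g 0 := by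
        intro t ht
        set ν : Finset E → ℝ := fun S => μstar S + t * h S with hν_def
        have hν1 : ∀ S, 0 ≤ ν S := by
          intro S
          by_cases hSF : S ∈ F
          · have hεle : ε ≤ μstar S / (|h S| + 1) := Finset.inf'_le _ hSF
            have h1 : |t * h S| < μstar S := by
              rw [abs_mul]
              calc |t| * |h S| ≤ |t| * (|h S| + 1) := by
                    apply mul_le_mul_of_nonneg_left (by linarith) (abs_nonneg t)
                _ < (μstar S / (|h S| + 1)) * (|h S| + 1) := by
                    apply mul_lt_mul_of_pos_right (lt_of_lt_of_le ht hεle) (by positivity)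
                _ = μstar S := by field_simp
            have := neg_abs_le (t * h S)
            simp only [hν_def]
            linarith [abs_lt.1 h1]
          · simp [hν_def, hzero μstar hμ_supp S hSF, hsupp S hSF]
        have hν2 : ∀ S, ν S ≠ 0 → S ∈ F := by
          intro S hS
          by_contra hSF
          exact hS (by simp [hν_def, hzero μstar hμ_supp S hSF, hsupp S hSF])
        have hν3 : (∑ S : Finset E, ν S) = 1 := by
          simp only [hν_def, Finset.sum_add_distrib, ← Finset.mul_sum, hμ_sum, hsum]; ring
        have hν4 : ∀ e, ∑ S ∈ univ.filter (fun S => e ∈ S), ν S = p e := by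
          intro e
          simp only [hν_def, Finset.sum_add_distrib, ← Finset.mul_sum, hμ_marg e, hmarg e]; ring
        have := hmax' ν hν1 hν2 hν3 hν4
        simpa [hg_def, hν_def] using this
      rw [IsLocalMax, IsMaxFilter, Metric.eventually_nhds_iff]
      exact ⟨ε, hε, fun {y} hy => hkey y (by simpa [Real.dist_eq] using hy)⟩
    have hd0 : ∑ S ∈ F, (-Real.log (μstar S) - 1) * h S = 0 :=
      hlocmax.hasDerivAt_eq_zero hderiv
    have hFh : ∑ S ∈ F, h S = 0 := by
      rw [Finset.sum_subset (Finset.subset_univ F) (fun S _ hS => hsupp S hS)]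
      exact hsum
    have hexp : ∑ S ∈ F, (-Real.log (μstar S) - 1) * h S
        = -∑ S ∈ F, h S * Real.log (μstar S) - ∑ S ∈ F, h S := by
      rw [← Finset.sum_neg_distrib, ← Finset.sum_sub_distrib]
      exact Finset.sum_congr rfl fun S _ => by ring
    rw [hexp, hFh] at hd0
    linarith
  -- Step 3 : Gibbs coefficients
  have hGibbs : ∃ c : Option E → ℝ, ∀ S ∈ F,
      Real.log (μstar S) = c none + ∑ e ∈ S, c (some e) := by
    have hFsum : ∀ (f : Finset E → ℝ), ∑ S : ↥F, f S = ∑ S ∈ F, f S :=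
      fun f => Finset.sum_coe_sort F f
    have key : ∀ h : ↥F → ℝ,
        (∀ o : Option E, ∑ S : ↥F,
          (Option.elim o 1 fun e => if e ∈ (S : Finset E) then (1:ℝ) else 0) * h S = 0) →
        ∑ S : ↥F, Real.log (μstar S) * h S = 0 := by
      intro h hperp
      set h' : Finset E → ℝ := fun S => if hS : S ∈ F then h ⟨S, hS⟩ else 0 with hh'
      have hh'zero : ∀ S, S ∉ F → h' S = 0 := fun S hS => dif_neg hS
      have hh'eq : ∀ S : ↥F, h' S = h S := fun S => dif_pos S.2
      have hsum0 : (∑ S : Finset E, h' S) = 0 := by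
        have h0 := hperp none
        simp only [Option.elim_none, one_mul] at h0
        rw [← Finset.sum_subset (Finset.subset_univ F) (fun S _ hS => hh'zero S hS), ← hFsum h']
        rw [← h0]
        exact Finset.sum_congr rfl fun S _ => hh'eq S
      have hmarg0 : ∀ e, ∑ S ∈ univ.filter (fun S => e ∈ S), h' S = 0 := by
        intro e
        have h0 := hperp (some e)
        simp only [Option.elim_some, ite_mul, one_mul, zero_mul] at h0
        have step1 : ∑ S ∈ univ.filter (fun S => e ∈ S), h' S
            = ∑ S ∈ F.filter (fun S => e ∈ S), h' S := by
          refine (Finset.sum_subset (Finset.filter_subset_filter _ (Finset.subset_univ F)) ?_).symm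
          intro S hS hSn
          refine hh'zero S (fun hSF => hSn (Finset.mem_filter.2 ⟨hSF, (Finset.mem_filter.1 hS).2⟩))
        rw [show (∑ x : ↥F, if e ∈ (x : Finset E) then h x else 0)
            = ∑ S ∈ F, (if e ∈ S then h' S else 0) from by
          rw [← hFsum (fun S => if e ∈ S then h' S else 0)]
          exact Finset.sum_congr rfl fun S _ => by rw [hh'eq]] at h0
        rw [step1, Finset.sum_filter]
        exact h0
      have hfin := hstat h' hh'zero hsum0 hmarg0
      rw [← hFsum (fun S => h' S * Real.log (μstar S))] at hfin
      rw [← hfin]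
      exact Finset.sum_congr rfl fun S _ => by rw [hh'eq]; ring
      -- end
    obtain ⟨c, hc⟩ := span_helper
      (fun o (S : ↥F) => Option.elim o 1 fun e => if e ∈ (S : Finset E) then (1:ℝ) else 0)
      (fun S : ↥F => Real.log (μstar S)) key
    refine ⟨c, fun S hS => ?_⟩
    have h1 := hc ⟨S, hS⟩
    rw [Fintype.sum_option] at h1
    simp only [Option.elim_none, Option.elim_some, mul_one, mul_ite, mul_zero] at h1
    rw [← h1, Finset.sum_ite_mem, Finset.univ_inter]
  obtain ⟨c, hc⟩ := hGibbs
  set w : E → ℝ := fun e => Real.exp (c (some e)) with hw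
  set Z0 : ℝ := Real.exp (c none) with hZ0
  have hZ0_pos : 0 < Z0 := Real.exp_pos _
  have hw_pos : ∀ e, 0 < w e := fun e => Real.exp_pos _
  have hμ_eq : ∀ S ∈ F, μstar S = Z0 * ∏ e ∈ S, w e := by
    intro S hS
    rw [show μstar S = Real.exp (Real.log (μstar S)) from (Real.exp_log (hμ_pos S hS)).symm,
      hc S hS, Real.exp_add, Real.exp_sum]
  have hZ : ∑ T ∈ F, ∏ e ∈ T, w e = 1 / Z0 := by
    have h1 : Z0 * ∑ T ∈ F, ∏ e ∈ T, w e = 1 := by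
      rw [Finset.mul_sum,
        show (∑ T ∈ F, Z0 * ∏ e ∈ T, w e) = ∑ T ∈ F, μstar T from
          Finset.sum_congr rfl fun T hT => (hμ_eq T hT).symm,
        Finset.sum_subset (Finset.subset_univ F) (fun S _ hS => hzero μstar hμ_supp S hS), hμ_sum]
    rw [eq_div_iff (ne_of_gt hZ0_pos)]
    linarith [h1]
  constructor
  · -- uniqueness
    intro ν h1 h2 h3 h4 hge
    rw [hHrw, hHrw] at hge
    by_contra hne
    obtain ⟨S0, hS0⟩ := Function.ne_iff.1 hne
    have hS0F : S0 ∈ F := by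
      by_contra h
      exact hS0 (by rw [hzero ν h2 S0 h, hzero μstar hμ_supp S0 h])
    set σ : Finset E → ℝ := fun S => (1/2 : ℝ) * ν S + (1/2 : ℝ) * μstar S with hσdef
    have hσ1 : ∀ S, 0 ≤ σ S := fun S => add_nonneg (by linarith [h1 S]) (by linarith [hμ_nonneg S])
    have hσ2 : ∀ S, σ S ≠ 0 → S ∈ F := by
      intro S hS
      by_contra h
      exact hS (by simp [hσdef, hzero ν h2 S h, hzero μstar hμ_supp S h])
    have hσ3 : (∑ S : Finset E, σ S) = 1 := by
      simp only [hσdef, Finset.sum_add_distrib, ← Finset.mul_sum, h3, hμ_sum]; norm_num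
    have hσ4 : ∀ e, ∑ S ∈ univ.filter (fun S => e ∈ S), σ S = p e := by
      intro e
      simp only [hσdef, Finset.sum_add_distrib, ← Finset.mul_sum, h4 e, hμ_marg e]; ring
    have hkey : ∑ S ∈ F, ((1/2 : ℝ) * Real.negMulLog (ν S) + (1/2 : ℝ) * Real.negMulLog (μstar S))
        < ∑ S ∈ F, Real.negMulLog (σ S) := by
      apply Finset.sum_lt_sum
      · intro S _
        have := Real.concaveOn_negMulLog.2 (Set.mem_Ici.2 (h1 S)) (Set.mem_Ici.2 (hμ_nonneg S))
          (by norm_num : (0:ℝ) ≤ 1/2) (by norm_num : (0:ℝ) ≤ 1/2) (by norm_num)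
        simpa [hσdef, smul_eq_mul] using this
      · refine ⟨S0, hS0F, ?_⟩
        have := Real.strictConcaveOn_negMulLog.2 (Set.mem_Ici.2 (h1 S0))
          (Set.mem_Ici.2 (hμ_nonneg S0)) hS0 (by norm_num : (0:ℝ) < 1/2)
          (by norm_num : (0:ℝ) < 1/2) (by norm_num)
        simpa [hσdef, smul_eq_mul] using this
    have hb := hmax' σ hσ1 hσ2 hσ3 hσ4
    rw [Finset.sum_add_distrib, ← Finset.mul_sum, ← Finset.mul_sum] at hkey
    linarith
  · refine ⟨w, hw_pos, ?_, ?_, ?_⟩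
    · intro S hS
      rw [hμ_eq S hS, hZ]
      rw [eq_div_iff (by positivity : (1:ℝ)/Z0 ≠ 0)]
      field_simp
    · intro e
      have h1w : (0:ℝ) < 1 + w e := by linarith [hw_pos e]
      exact ⟨div_pos (hw_pos e) h1w, (div_lt_one h1w).2 (by linarith [hw_pos e])⟩
    · intro e T hT heT hpos
      by_cases hins : insert e T ∈ F
      · rw [if_pos hins]
        have hP : 0 < ∏ f ∈ T, w f := Finset.prod_pos (fun f _ => hw_pos f)
        have hμT := hμ_eq T hT
        have hμiT := hμ_eq _ hins
        rw [Finset.prod_insert heT] at hμiT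
        rw [hμT, hμiT, div_eq_div_iff (by nlinarith [hw_pos e]) (by nlinarith [hw_pos e])]
        ring
      · rw [if_neg hins, hzero μstar hμ_supp _ hins, zero_div]
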